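/- Let N ≥ 2, a_j > 0, b_{j+1/2} > 0, λ > 0, and let M be the tridiagonal Dirichlet-scheme matrix with M_{11} = a_1 + λ b_{3/2} + 2λ b_{1/2}, M_{jj} = a_j + λ b_{j−1/2} + λ b_{j+1/2} (1<j<N), M_{NN} = a_N + λ b_{N−1/2} + 2λ b_{N+1/2}, M_{j,j+1} = M_{j+1,j} = −λ b_{j+1/2}. If MG = r with r_j ≥ 0 for all j and r_k > 0 for some k, and moreover all r_j > 0, then G_j > 0 for all j. -/
import Mathlib


/-- Strict positivity version of the positivity-preservation theorem for the
Dirichlet scheme: if all right-hand sides are strictly positive, the solution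
of the tridiagonal system is strictly positive.
Here `b j` denotes `b_{j+1/2}`, indices `j = 1, ..., N`. -/
theorem stmt_12 (N : ℕ) (hN : 2 ≤ N) (a b G r : ℕ → ℝ) (lam : ℝ)
    (ha : ∀ j, 1 ≤ j → j ≤ N → 0 < a j)
    (hb : ∀ j, j ≤ N → 0 < b j)
    (hlam : 0 < lam)
    (heq1 : (a 1 + lam * b 1 + 2 * lam * b 0) * G 1 - lam * b 1 * G 2 = r 1)
    (heqmid : ∀ j, 1 < j → j < N →
      -(lam * b (j - 1)) * G (j - 1)
        + (a j + lam * b (j - 1) + lam * b j) * G j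
        - lam * b j * G (j + 1) = r j)
    (heqN : -(lam * b (N - 1)) * G (N - 1)
        + (a N + lam * b (N - 1) + 2 * lam * b N) * G N = r N)
    (hr : ∀ j, 1 ≤ j → j ≤ N → 0 < r j) :
    ∀ j, 1 ≤ j → j ≤ N → 0 < G j := by
  have h1N : (1:ℕ) ≤ N := by omega
  obtain ⟨m, hm, hmin⟩ := Finset.exists_min_image (Finset.Icc 1 N) G
    ⟨1, Finset.mem_Icc.mpr ⟨le_refl 1, h1N⟩⟩
  rw [Finset.mem_Icc] at hm
  obtain ⟨hm1, hmN⟩ := hm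
  have hmin' : ∀ j, 1 ≤ j → j ≤ N → G m ≤ G j := fun j h1 h2 =>
    hmin j (Finset.mem_Icc.mpr ⟨h1, h2⟩)
  suffices h : 0 < G m by
    intro j hj1 hj2; exact lt_of_lt_of_le h (hmin' j hj1 hj2)
  by_cases hm1' : m = 1
  · subst hm1'
    have hG2 : G 1 ≤ G 2 := hmin' 2 (by omega) hN
    have hb0 := hb 0 (by omega)
    have hb1 := hb 1 h1N
    have ha1 := ha 1 le_rfl h1N
    have hr1 := hr 1 le_rfl h1N
    by_contra hG
    push_neg at hG
    nlinarith [mul_pos hlam hb0, mul_pos hlam hb1,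
      mul_nonneg (mul_pos hlam hb1).le (sub_nonneg.mpr hG2)]
  · by_cases hmN' : m = N
    · subst hmN'
      have hGp : G m ≤ G (m - 1) := hmin' (m - 1) (by omega) (by omega)
      have hbN := hb m le_rfl
      have hbN1 := hb (m - 1) (by omega)
      have haN := ha m h1N le_rfl
      have hrN := hr m h1N le_rfl
      have e := heqN
      by_contra hG
      push_neg at hG
      nlinarith [mul_pos hlam hbN, mul_pos hlam hbN1,
        mul_nonneg (mul_pos hlam hbN1).le (sub_nonneg.mpr hGp)]
    · have hm2 : 1 < m := by omega
      have hmN2 : m < N := by omega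
      have e := heqmid m hm2 hmN2
      have hGl : G m ≤ G (m - 1) := hmin' (m - 1) (by omega) (by omega)
      have hGr : G m ≤ G (m + 1) := hmin' (m + 1) (by omega) (by omega)
      have hbm := hb m (by omega)
      have hbm1 := hb (m - 1) (by omega)
      have ham := ha m (by omega) (by omega)
      have hrm := hr m (by omega) (by omega)
      by_contra hG
      push_neg at hG
      nlinarith [mul_pos hlam hbm, mul_pos hlam hbm1,
        mul_nonneg (mul_pos hlam hbm).le (sub_nonneg.mpr hGr),
        mul_nonneg (mul_pos hlam hbm1).le (sub_nonneg.mpr hGl)]
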